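/- For π ∈ Π_d with b = |B_π| (the block containing d), under the equivalence ≡_{d+1} (identifying e_σ and e_τ when λ(σ) = λ(τ) and the blocks containing d+1 have equal size), e_π↑ ≡_{d+1} (1/b) e_{(π/d+1)} − (1/b) e_{(π+(d+1))}. -/

import Mathlib

open Finset

attribute [local instance] Classical.propDecidable

/-- Homogeneous degree-`d` noncommutative symmetric functions, viewed as
coefficient functions on words of length `d` in the variables. -/
abbrev NCF (d : ℕ) := (Fin d → ℕ) → ℚ

/-- A coloring is proper for the edge family `ends` if the endpoints of every
edge receive distinct colors. -/
def Proper {d : ℕ} {ε : Type*} {C : Type*} (ends : ε → Sym2 (Fin d)) (w : Fin d → C) : Prop :=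
  ∀ (e : ε) (i j : Fin d), ends e = s(i, j) → w i ≠ w j

/-- The noncommutative chromatic symmetric function `Y_G`. -/
noncomputable def Y {d : ℕ} {ε : Type*} (ends : ε → Sym2 (Fin d)) : NCF d :=
  fun w => if Proper ends w then 1 else 0

/-- Noncommutative monomial symmetric function indexed by a set partition. -/
noncomputable def mFun {d : ℕ} (π : Setoid (Fin d)) : NCF d :=
  fun w => if (∀ i j, w i = w j ↔ π i j) then 1 else 0

/-- Noncommutative power sum symmetric function indexed by a set partition. -/
noncomputable def pFun {d : ℕ} (π : Setoid (Fin d)) : NCF d :=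
  fun w => if (∀ i j, π i j → w i = w j) then 1 else 0

/-- Noncommutative elementary symmetric function indexed by a set partition. -/
noncomputable def eFun {d : ℕ} (π : Setoid (Fin d)) : NCF d :=
  fun w => if (∀ i j, i ≠ j → π i j → w i ≠ w j) then 1 else 0

noncomputable instance setoidFintype (d : ℕ) : Fintype (Setoid (Fin d)) :=
  Fintype.ofInjective (fun s : Setoid (Fin d) => (s : Fin d → Fin d → Prop))
    (fun s t h => Setoid.ext fun a b => by
      have := congrFun (congrFun h a) b; simpa using this.to_iff)

/-- Position action of a permutation on words/NCFs. -/
noncomputable def act {d : ℕ} (δ : Equiv.Perm (Fin d)) (f : NCF d) : NCF d :=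
  fun w => f (w ∘ δ)

/-- The induction operator `↑`, repeating the last variable. -/
noncomputable def up {n : ℕ} (f : NCF (n + 1)) : NCF (n + 2) :=
  fun w => if w (Fin.last (n + 1)) = w ⟨n, by omega⟩ then f (fun i => w i.castSucc) else 0

/-- Vertex map collapsing the last vertex onto the next-to-last one (for contraction). -/
def collapse {n : ℕ} : Fin (n + 2) → Fin (n + 1) :=
  fun i => if h : (i : ℕ) < n + 1 then ⟨i, h⟩ else ⟨n, by omega⟩

/-- The partition of `[d]` into connected components of the spanning subgraph with edge set `S`. -/
def components {d : ℕ} {ε : Type*} (ends : ε → Sym2 (Fin d)) (S : Finset ε) :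
    Setoid (Fin d) :=
  Relation.EqvGen.setoid (fun i j => ∃ e ∈ S, ends e = s(i, j))

/-- The size of the block of `π` containing `i`. -/
noncomputable def blockCard {n : ℕ} (π : Setoid (Fin n)) (i : Fin n) : ℕ :=
  (Finset.univ.filter (fun j => π i j)).card

/-- The multiset of block sizes (the type `λ(π)`) of a set partition. -/
noncomputable def sizes {n : ℕ} (π : Setoid (Fin n)) : Multiset ℕ :=
  (Finset.univ.image (fun i => Finset.univ.filter (fun j => π i j))).val.map Finset.card

/-- `σ ≡ᵢ τ` : same type and blocks containing `i` of equal size. -/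
def cls {n : ℕ} (i : Fin n) (σ τ : Setoid (Fin n)) : Prop :=
  sizes σ = sizes τ ∧ blockCard σ i = blockCard τ i

/-- Congruence modulo `i` of noncommutative symmetric functions: the amalgamated
coefficients of their `e`-expansions agree on every `≡ᵢ`-class. -/
noncomputable def EquivI {n : ℕ} (i : Fin n) (F G : NCF n) : Prop :=
  ∃ a b : Setoid (Fin n) → ℚ,
    F = ∑ τ : Setoid (Fin n), a τ • eFun τ ∧
    G = ∑ τ : Setoid (Fin n), b τ • eFun τ ∧
    ∀ τ, (∑ σ : Setoid (Fin n), if cls i σ τ then a σ else 0)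
        = ∑ σ : Setoid (Fin n), if cls i σ τ then b σ else 0

/-- `(e)`-positivity with respect to the congruence modulo `i`. -/
noncomputable def EPos {n : ℕ} (i : Fin n) (F : NCF n) : Prop :=
  ∃ a : Setoid (Fin n) → ℚ,
    F = ∑ τ : Setoid (Fin n), a τ • eFun τ ∧
    ∀ τ, 0 ≤ ∑ σ : Setoid (Fin n), if cls i σ τ then a σ else 0

/-- `(e)`-positivity of a labeled graph: for some labeling and some congruence. -/
noncomputable def EPosG {d : ℕ} {ε : Type*} (ends : ε → Sym2 (Fin d)) : Prop :=
  ∃ (δ : Equiv.Perm (Fin d)) (i : Fin d),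
    EPos i (Y (fun e => (ends e).map δ))

/-- Extend a partition of `{0,…,n}` to one of `{0,…,n+m}`: old blocks are kept,
the new elements (indices `≥ n+1`) satisfying `Q` are merged into the block of
the old last element `n`, and the remaining new elements form singletons. -/
def extendB {n : ℕ} (m : ℕ) (π : Setoid (Fin (n + 1))) (Q : ℕ → Prop) :
    Setoid (Fin (n + 1 + m)) where
  r x y := x = y ∨
    (∃ (hx : (x : ℕ) < n + 1) (hy : (y : ℕ) < n + 1), π ⟨x, hx⟩ ⟨y, hy⟩) ∨
    (((∃ hx : (x : ℕ) < n + 1, π ⟨x, hx⟩ (Fin.last n)) ∨ (n + 1 ≤ (x : ℕ) ∧ Q (x : ℕ))) ∧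
     ((∃ hy : (y : ℕ) < n + 1, π ⟨y, hy⟩ (Fin.last n)) ∨ (n + 1 ≤ (y : ℕ) ∧ Q (y : ℕ))))
  iseqv := by
    constructor
    · intro x; exact Or.inl rfl
    · rintro x y (rfl | ⟨hx, hy, h⟩ | ⟨h1, h2⟩)
      · exact Or.inl rfl
      · exact Or.inr (Or.inl ⟨hy, hx, π.symm h⟩)
      · exact Or.inr (Or.inr ⟨h2, h1⟩)
    · rintro x y z (rfl | ⟨hx, hy, h⟩ | ⟨h1, h2⟩) h'
      · exact h'
      · rcases h' with rfl | ⟨hy', hz, h''⟩ | ⟨h1', h2'⟩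
        · exact Or.inr (Or.inl ⟨hx, hy, h⟩)
        · exact Or.inr (Or.inl ⟨hx, hz, π.trans h h''⟩)
        · rcases h1' with ⟨hy', hB⟩ | ⟨hge, _⟩
          · exact Or.inr (Or.inr ⟨Or.inl ⟨hx, π.trans h hB⟩, h2'⟩)
          · omega
      · rcases h' with rfl | ⟨hy', hz, h''⟩ | ⟨h1', h2'⟩
        · exact Or.inr (Or.inr ⟨h1, h2⟩)
        · rcases h2 with ⟨hy2, hB⟩ | ⟨hge, _⟩
          · exact Or.inr (Or.inr ⟨h1, Or.inl ⟨hz, π.trans (π.trans (π.symm h'') hB) (π.refl _)⟩⟩)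
          · omega
        · exact Or.inr (Or.inr ⟨h1, h2'⟩)

/-- `π + (n+1)` : insert the new element `n+1` into the block containing `n`. -/
def addLast {n : ℕ} (π : Setoid (Fin (n + 1))) : Setoid (Fin (n + 2)) :=
  extendB 1 π (fun _ => True)

/-- `π / (n+1)` : add the new element `n+1` as a singleton block. -/
def addSingleton {n : ℕ} (π : Setoid (Fin (n + 1))) : Setoid (Fin (n + 2)) :=
  extendB 1 π (fun _ => False)

/-- `σ / (d+1),…,(d+m)` : add the new elements as one additional block. -/
def addBlock {d : ℕ} (m : ℕ) (σ : Setoid (Fin d)) : Setoid (Fin (d + m)) where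
  r x y := (∃ (hx : (x : ℕ) < d) (hy : (y : ℕ) < d), σ ⟨x, hx⟩ ⟨y, hy⟩) ∨
    (d ≤ (x : ℕ) ∧ d ≤ (y : ℕ))
  iseqv := by
    constructor
    · intro x
      by_cases h : (x : ℕ) < d
      · exact Or.inl ⟨h, h, σ.refl _⟩
      · exact Or.inr ⟨by omega, by omega⟩
    · rintro x y (⟨hx, hy, h⟩ | ⟨hx, hy⟩)
      · exact Or.inl ⟨hy, hx, σ.symm h⟩
      · exact Or.inr ⟨hy, hx⟩
    · rintro x y z (⟨hx, hy, h⟩ | ⟨hx, hy⟩) (⟨hy', hz, h'⟩ | ⟨hy', hz⟩)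
      · exact Or.inl ⟨hx, hz, σ.trans h h'⟩
      · omega
      · omega
      · exact Or.inr ⟨hx, hz⟩

noncomputable instance setoidLFO (d : ℕ) : LocallyFiniteOrder (Setoid (Fin d)) :=
  Fintype.toLocallyFiniteOrder

/-- The Möbius function of the lattice of set partitions, with values in `ℚ`. -/
noncomputable def muS {d : ℕ} (a b : Setoid (Fin d)) : ℚ :=
  IncidenceAlgebra.mu ℚ a b

/-- Falling factorial `⟨m⟩_i = m(m-1)⋯(m-i+1)` as a rational number. -/
def ffact (m i : ℕ) : ℚ := ∏ j ∈ Finset.range i, ((m : ℚ) - j)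

/-- Rising factorial `(b)_i = b(b+1)⋯(b+i-1)` as a rational number. -/
def rfact (b i : ℕ) : ℚ := ∏ j ∈ Finset.range i, ((b : ℚ) + j)

/-- The path `P_{n+1}` with edges `v_i v_{i+1}`. -/
def pathEnds (n : ℕ) : Fin n → Sym2 (Fin (n + 1)) :=
  fun e => s(e.castSucc, e.succ)

/-- The cycle `C_{n+1}` with edges `v_i v_{i+1}` (indices mod `n+1`). -/
def cycleEnds (n : ℕ) : Fin (n + 1) → Sym2 (Fin (n + 1)) :=
  fun i => s(i, i + 1)

/-- The commutative chromatic symmetric function `X_G` in `N` variables. -/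
noncomputable def Xcomm {d : ℕ} {ε : Type*} (ends : ε → Sym2 (Fin d)) (N : ℕ) :
    MvPolynomial (Fin N) ℚ :=
  ∑ κ : Fin d → Fin N, if Proper ends κ then ∏ i, MvPolynomial.X (κ i) else 0

section Orientations

variable {V : Type*} {ε : Type*}

/-- `o` is an orientation of the graph with edge endpoints `ends`. -/
def IsOrient (ends : ε → Sym2 V) (o : ε → V × V) : Prop :=
  ∀ e, s((o e).1, (o e).2) = ends e

/-- An orientation is acyclic when it admits no directed cycle. -/
def Acyclic (o : ε → V × V) : Prop :=
  ∀ v : V, ¬ Relation.TransGen (fun a b => ∃ e, o e = (a, b)) v v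

/-- `v` is a sink: every edge incident to `v` is directed toward `v`. -/
def IsSink (o : ε → V × V) (v : V) : Prop := ∀ e, (o e).1 ≠ v

/-- The set of acyclic orientations with unique sink `v₀`. -/
def Aset (ends : ε → Sym2 V) (v₀ : V) : Set (ε → V × V) :=
  {o | IsOrient ends o ∧ Acyclic o ∧ IsSink o v₀ ∧ ∀ v, IsSink o v → v = v₀}

end Orientations

/-- A circuit: a closed walk `u_0, u_1, …, u_m, u_0` with distinct vertices and
distinct edges. -/
structure Circuit {d : ℕ} {ε : Type*} (ends : ε → Sym2 (Fin d)) where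
  m : ℕ
  v : Fin (m + 1) → Fin d
  f : Fin (m + 1) → ε
  hv : Function.Injective v
  hf : Function.Injective f
  he : ∀ k, ends (f k) = s(v k, v (k + 1))

/-- The broken circuit obtained from a circuit: its edge set with the largest
edge removed. -/
noncomputable def broken {d : ℕ} {ε : Type*} [LinearOrder ε] {ends : ε → Sym2 (Fin d)}
    (C : Circuit ends) : Finset ε :=
  (Finset.univ.image C.f).erase
    ((Finset.univ.image C.f).max'
      ⟨C.f 0, Finset.mem_image_of_mem _ (Finset.mem_univ _)⟩)

/-- `P(α)`: partitions `τ ≤ π+(d+1)` whose blocks can be listed as `B_1,…,B_l`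
with `|B_i| = α_i` and `d+1 ∈ B_1`. -/
def Pset {d : ℕ} (π : Setoid (Fin (d + 1))) (l : ℕ) (α : Fin l → ℕ) :
    Set (Setoid (Fin (d + 2))) :=
  {τ | τ ≤ addLast π ∧ ∃ B : Fin l → Finset (Fin (d + 2)),
    (∀ x y, τ x y ↔ ∃ i, x ∈ B i ∧ y ∈ B i) ∧
    (∀ i j, i ≠ j → Disjoint (B i) (B j)) ∧
    (∀ i, (B i).card = α i) ∧
    ∃ hl : 0 < l, Fin.last (d + 1) ∈ B ⟨0, hl⟩}

/-- `G + K_{m+1}` : attach a complete graph on `{v_{d}, v_{d+1}, …, v_{d+m}}`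
(`m` new vertices) to the last vertex of a graph `G` on `d+1` vertices. -/
def attachEnds {d : ℕ} {ε : Type*} (ends : ε → Sym2 (Fin (d + 1))) (m : ℕ) :
    ε ⊕ {p : Fin (m + 1) × Fin (m + 1) // p.1 < p.2} → Sym2 (Fin (d + 1 + m))
  | Sum.inl e => (ends e).map (fun x : Fin (d + 1) => (⟨(x : ℕ), by omega⟩ : Fin (d + 1 + m)))
  | Sum.inr p => s(⟨d + (p.1.1 : ℕ), by omega⟩, ⟨d + (p.1.2 : ℕ), by omega⟩)

/-- The disjoint union `G ⊎ K_m`, with the clique on the `m` new vertices. -/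
def disjEnds {d : ℕ} {ε : Type*} (ends : ε → Sym2 (Fin d)) (m : ℕ) :
    ε ⊕ {p : Fin m × Fin m // p.1 < p.2} → Sym2 (Fin (d + m))
  | Sum.inl e => (ends e).map (Fin.castAdd m)
  | Sum.inr p => s(Fin.natAdd d p.1.1, Fin.natAdd d p.1.2)

namespace UpE

variable {n : ℕ}

def kerS (w : Fin n → ℕ) : Setoid (Fin n) :=
  ⟨fun i j => w i = w j, ⟨fun _ => rfl, Eq.symm, Eq.trans⟩⟩

lemma eFun_apply (τ : Setoid (Fin n)) (w : Fin n → ℕ) :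
    eFun τ w = if τ ⊓ kerS w = ⊥ then 1 else 0 := by
  unfold eFun
  refine if_congr ?_ rfl rfl
  constructor
  · intro h
    refine le_antisymm (Setoid.le_def.mpr ?_) bot_le
    intro i j hij
    obtain ⟨h1, h2⟩ := Setoid.inf_iff_and.mp hij
    rw [Setoid.bot_def]
    by_contra hne
    exact h i j hne h1 h2
  · intro h i j hne hτ hw
    have h2 : (τ ⊓ kerS w) i j := Setoid.inf_iff_and.mpr ⟨hτ, hw⟩
    rw [h, Setoid.bot_def] at h2
    exact hne h2

lemma pFun_apply (τ : Setoid (Fin n)) (w : Fin n → ℕ) :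
    pFun τ w = if τ ≤ kerS w then 1 else 0 := by
  unfold pFun
  refine if_congr ⟨fun h => Setoid.le_def.mpr (fun {i j} h' => h i j h'),
    fun h i j hij => Setoid.le_def.mp h hij⟩ rfl rfl

lemma mFun_apply (σ : Setoid (Fin n)) (w : Fin n → ℕ) :
    mFun σ w = if kerS w = σ then 1 else 0 := by
  unfold mFun
  refine if_congr ?_ rfl rfl
  constructor
  · intro h; exact Setoid.ext h
  · intro h i j; rw [← h]; exact Iff.rfl

def orb (g : Equiv.Perm (Fin n)) : Setoid (Fin n) :=
  Relation.EqvGen.setoid (fun a b => g a = b)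

lemma orb_rel (g : Equiv.Perm (Fin n)) (i : Fin n) : orb g i (g i) :=
  Relation.EqvGen.rel _ _ rfl

lemma orb_le_iff {g : Equiv.Perm (Fin n)} {x : Setoid (Fin n)} :
    orb g ≤ x ↔ ∀ i, x i (g i) := by
  constructor
  · intro h i; exact Setoid.le_def.mp h (orb_rel g i)
  · intro h; exact Setoid.eqvGen_le (fun a b hab => hab ▸ h a)

noncomputable def sgn (g : Equiv.Perm (Fin n)) : ℚ := ((Equiv.Perm.sign g : ℤ) : ℚ)

lemma sgn_mul_swap {i j : Fin n} (h : i ≠ j) (g : Equiv.Perm (Fin n)) :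
    sgn (Equiv.swap i j * g) = - sgn g := by
  unfold sgn
  rw [Equiv.Perm.sign_mul, Equiv.Perm.sign_swap h]
  push_cast
  ring

noncomputable def nu (x : Setoid (Fin n)) : ℚ :=
  ∑ g ∈ univ.filter (fun g : Equiv.Perm (Fin n) => orb g = x), sgn g

lemma notbot_exists {x : Setoid (Fin n)} (h : x ≠ ⊥) : ∃ i j, i ≠ j ∧ x i j := by
  by_contra hc
  push_neg at hc
  apply h
  refine le_antisymm (Setoid.le_def.mpr ?_) bot_le
  intro i j hij
  rw [Setoid.bot_def]
  by_contra hne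
  exact hc i j hne hij

lemma sum_sgn_le (x : Setoid (Fin n)) :
    ∑ g ∈ univ.filter (fun g : Equiv.Perm (Fin n) => orb g ≤ x), sgn g
      = if x = ⊥ then 1 else 0 := by
  split_ifs with hx
  · subst hx
    have hset : univ.filter (fun g : Equiv.Perm (Fin n) => orb g ≤ ⊥) = {1} := by
      ext g
      simp only [mem_filter, mem_univ, true_and, mem_singleton]
      constructor
      · intro h
        apply Equiv.ext
        intro i
        have h2 := orb_le_iff.mp h i
        rw [Setoid.bot_def] at h2
        simpa using h2.symm
      · rintro rfl
        exact orb_le_iff.mpr (fun i => by rw [Setoid.bot_def]; rfl)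
    rw [hset, sum_singleton]
    unfold sgn; simp
  · obtain ⟨i, j, hij, hxij⟩ := notbot_exists hx
    apply Finset.sum_involution (g := fun g _ => Equiv.swap i j * g)
    · intro g hg
      rw [sgn_mul_swap hij]; ring
    · intro g hg hne hgg
      have ht : Equiv.swap i j = 1 := by
        have h1 : Equiv.swap i j * g = 1 * g := by rw [one_mul]; exact hgg
        exact mul_right_cancel h1
      have h2 : Equiv.swap i j i = (1 : Equiv.Perm (Fin n)) i := by rw [ht]
      simp only [Equiv.swap_apply_left, Equiv.Perm.one_apply] at h2
      exact hij h2.symm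
    · intro g hg
      simp only [mem_filter, mem_univ, true_and] at hg ⊢
      rw [orb_le_iff] at hg ⊢
      intro k
      simp only [Equiv.Perm.mul_apply]
      rcases eq_or_ne (g k) i with h1 | h1
      · rw [h1, Equiv.swap_apply_left]
        exact x.trans (h1 ▸ hg k) hxij
      rcases eq_or_ne (g k) j with h2 | h2
      · rw [h2, Equiv.swap_apply_right]
        exact x.trans (h2 ▸ hg k) (x.symm hxij)
      · rw [Equiv.swap_apply_of_ne_of_ne h1 h2]
        exact hg k
    · intro g hg
      simp [← mul_assoc, Equiv.swap_mul_self]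

lemma sum_nu_Iic (x : Setoid (Fin n)) :
    ∑ ρ ∈ Iic x, nu ρ = if x = ⊥ then 1 else 0 := by
  rw [← sum_sgn_le x]
  have hmap : ∀ g ∈ univ.filter (fun g : Equiv.Perm (Fin n) => orb g ≤ x), orb g ∈ Iic x := by
    intro g hg; simp only [mem_filter, mem_univ, true_and] at hg; exact mem_Iic.mpr hg
  rw [← Finset.sum_fiberwise_of_maps_to hmap sgn]
  apply Finset.sum_congr rfl
  intro ρ hρ
  unfold nu
  apply Finset.sum_congr _ (fun _ _ => rfl)
  ext g
  simp only [mem_filter, mem_univ, true_and]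
  constructor
  · intro h; exact ⟨by rw [h]; exact mem_Iic.mp hρ, h⟩
  · exact fun h => h.2


section Cyc

lemma succ_mod_inj {l a b : ℕ} (ha : a < l) (hb : b < l) (h : (a+1) % l = (b+1) % l) : a = b := by
  rcases Nat.lt_or_ge (a+1) l with h1 | h1
  · rw [Nat.mod_eq_of_lt h1] at h
    rcases Nat.lt_or_ge (b+1) l with h2 | h2
    · rw [Nat.mod_eq_of_lt h2] at h; omega
    · have hb1 : b + 1 = l := by omega
      rw [hb1, Nat.mod_self] at h; omega
  · have ha1 : a + 1 = l := by omega
    rw [ha1, Nat.mod_self] at h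
    rcases Nat.lt_or_ge (b+1) l with h2 | h2
    · rw [Nat.mod_eq_of_lt h2] at h; omega
    · omega

lemma next_congr {α : Type*} [DecidableEq α] {l l' : List α} (h : l = l') (x : α) (hx : x ∈ l) :
    l.next x hx = l'.next x (h ▸ hx) := by subst h; rfl

noncomputable def blockList (x : Setoid (Fin n)) (i : Fin n) : List (Fin n) :=
  (univ.filter (fun j => x i j)).sort (· ≤ ·)

lemma mem_blockList {x : Setoid (Fin n)} {i k : Fin n} :
    k ∈ blockList x i ↔ x i k := by
  unfold blockList
  rw [Finset.mem_sort, mem_filter]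
  simp

lemma blockList_eq {x : Setoid (Fin n)} {i j : Fin n} (h : x i j) :
    blockList x i = blockList x j := by
  unfold blockList
  congr 1
  ext k
  simp only [mem_filter, mem_univ, true_and]
  exact ⟨fun h' => x.trans (x.symm h) h', fun h' => x.trans h h'⟩

lemma blockList_nodup (x : Setoid (Fin n)) (i : Fin n) : (blockList x i).Nodup :=
  Finset.sort_nodup _ _

lemma self_mem_blockList (x : Setoid (Fin n)) (i : Fin n) : i ∈ blockList x i :=
  mem_blockList.mpr (x.refl i)

noncomputable def nextf (x : Setoid (Fin n)) (i : Fin n) : Fin n :=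
  (blockList x i).next i (self_mem_blockList x i)

lemma nextf_rel (x : Setoid (Fin n)) (i : Fin n) : x i (nextf x i) :=
  mem_blockList.mp (List.next_mem _ _ _)

lemma blockList_get (x : Setoid (Fin n)) (i : Fin n) (c : Fin (blockList x i).length) :
    blockList x ((blockList x i).get c) = blockList x i :=
  (blockList_eq (mem_blockList.mp (List.get_mem _ c))).symm

lemma nextf_get (x : Setoid (Fin n)) (i : Fin n) (c : Fin (blockList x i).length) :
    nextf x ((blockList x i).get c)
      = (blockList x i).get ⟨(c + 1) % (blockList x i).length,
          Nat.mod_lt _ (Nat.zero_lt_of_lt c.2)⟩ := by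
  unfold nextf
  rw [next_congr (blockList_get x i c) _ (self_mem_blockList x _)]
  exact List.next_getElem _ (blockList_nodup x i) c.1 c.2

lemma nextf_inj (x : Setoid (Fin n)) : Function.Injective (nextf x) := by
  intro i j hij
  have hxi := nextf_rel x i
  have hxj := nextf_rel x j
  rw [hij] at hxi
  have hxij : x i j := x.trans hxi (x.symm hxj)
  obtain ⟨a, ha⟩ := List.mem_iff_get.mp (self_mem_blockList x i)
  obtain ⟨b0, hb0⟩ := List.mem_iff_get.mp (mem_blockList.mpr hxij : j ∈ blockList x i)
  have h1 := nextf_get x i a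
  have h2 := nextf_get x i b0
  rw [ha] at h1
  rw [hb0] at h2
  rw [h1, h2] at hij
  have hidx := (List.Nodup.get_inj_iff (blockList_nodup x i)).mp hij
  have : a.1 = b0.1 := succ_mod_inj a.2 b0.2 (congrArg Fin.val hidx)
  rw [← ha, ← hb0]
  congr 1
  exact Fin.ext this

noncomputable def cycPerm (x : Setoid (Fin n)) : Equiv.Perm (Fin n) :=
  Equiv.ofBijective (nextf x) (Finite.injective_iff_bijective.mp (nextf_inj x))

lemma cycPerm_apply (x : Setoid (Fin n)) (i : Fin n) : cycPerm x i = nextf x i := rfl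

lemma orb_cycPerm (x : Setoid (Fin n)) : orb (cycPerm x) = x := by
  apply le_antisymm
  · exact orb_le_iff.mpr (fun i => nextf_rel x i)
  · rw [Setoid.le_def]
    intro i j hxij
    obtain ⟨a, ha⟩ := List.mem_iff_get.mp (self_mem_blockList x i)
    obtain ⟨b0, hb0⟩ := List.mem_iff_get.mp (mem_blockList.mpr hxij : j ∈ blockList x i)
    have hlen : 0 < (blockList x i).length := Nat.zero_lt_of_lt a.2
    have key : ∀ s : ℕ, ∀ c : Fin (blockList x i).length,
        orb (cycPerm x) ((blockList x i).get c)
          ((blockList x i).get ⟨(c + s) % (blockList x i).length, Nat.mod_lt _ hlen⟩) := by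
      intro s
      induction s with
      | zero =>
        intro c
        have hc : (⟨(c + 0) % (blockList x i).length, Nat.mod_lt _ hlen⟩
            : Fin (blockList x i).length) = c := by
          apply Fin.ext
          simp [Nat.mod_eq_of_lt c.2]
        rw [hc]
      | succ s ih =>
        intro c
        refine (orb (cycPerm x)).trans (ih c) ?_
        have hstep := nextf_get x i ⟨(c + s) % (blockList x i).length, Nat.mod_lt _ hlen⟩
        have hidx : (⟨((c + s) % (blockList x i).length + 1) % (blockList x i).length,
              Nat.mod_lt _ hlen⟩ : Fin (blockList x i).length)
            = ⟨(c + (s+1)) % (blockList x i).length, Nat.mod_lt _ hlen⟩ := by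
          apply Fin.ext
          show ((c + s) % (blockList x i).length + 1) % (blockList x i).length
              = (c + (s+1)) % (blockList x i).length
          rw [Nat.mod_add_mod]
          congr 1
        rw [hidx] at hstep
        have := orb_rel (cycPerm x) ((blockList x i).get
          ⟨(c + s) % (blockList x i).length, Nat.mod_lt _ hlen⟩)
        rw [cycPerm_apply, hstep] at this
        exact this
    have hkey := key ((blockList x i).length - a.1 + b0.1) a
    have hidx2 : (⟨(a + ((blockList x i).length - a.1 + b0.1)) % (blockList x i).length,
          Nat.mod_lt _ hlen⟩ : Fin (blockList x i).length) = b0 := by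
      apply Fin.ext
      show (a.1 + ((blockList x i).length - a.1 + b0.1)) % (blockList x i).length = b0.1
      have h1 : a.1 + ((blockList x i).length - a.1 + b0.1)
          = (blockList x i).length + b0.1 := by omega
      rw [h1, Nat.add_mod_left, Nat.mod_eq_of_lt b0.2]
    rw [hidx2, ha, hb0] at hkey
    exact hkey

lemma exists_orb_eq (x : Setoid (Fin n)) : ∃ g : Equiv.Perm (Fin n), orb g = x :=
  ⟨cycPerm x, orb_cycPerm x⟩

end Cyc

section Sign

noncomputable def nblocks (x : Setoid (Fin n)) : ℕ :=
  (univ.image (fun i => univ.filter (fun j => x i j))).card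

lemma nblocks_le (x : Setoid (Fin n)) : nblocks x ≤ n := by
  unfold nblocks
  calc (univ.image (fun i => univ.filter (fun j => x i j))).card
      ≤ (univ : Finset (Fin n)).card := Finset.card_image_le
    _ = n := by simp

lemma nblocks_bot : nblocks (⊥ : Setoid (Fin n)) = n := by
  unfold nblocks
  have h : (fun i : Fin n => univ.filter (fun j => (⊥ : Setoid (Fin n)) i j))
      = fun i => {i} := by
    funext i; ext k
    simp only [mem_filter, mem_univ, true_and, mem_singleton]
    rw [Setoid.bot_def]
    exact ⟨fun h => h.symm, fun h => h.symm⟩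
  rw [h, Finset.card_image_of_injective _ Finset.singleton_injective]
  simp

lemma orb_one : orb (1 : Equiv.Perm (Fin n)) = ⊥ := by
  apply le_antisymm _ bot_le
  apply orb_le_iff.mpr
  intro k
  rw [Setoid.bot_def]
  rfl

lemma orb_fixed {g : Equiv.Perm (Fin n)} {i : Fin n} (h : g i = i) :
    ∀ k, orb g i k → k = i := by
  intro k hk
  let E : Setoid (Fin n) := ⟨fun a b => (a = i ↔ b = i),
    ⟨fun _ => Iff.rfl, fun h => h.symm, fun h h' => h.trans h'⟩⟩
  have hle : orb g ≤ E := by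
    apply orb_le_iff.mpr
    intro a
    show a = i ↔ g a = i
    constructor
    · rintro rfl; exact h
    · intro h2; exact g.injective (h2.trans h.symm)
  exact (Setoid.le_def.mp hle hk).mp rfl

lemma orb_swap_mul {g : Equiv.Perm (Fin n)} {i : Fin n} (hi : g i ≠ i) :
    ∀ a b, orb g a b ↔
      (orb (Equiv.swap i (g i) * g) a b ∨
        ((a = i ∨ orb (Equiv.swap i (g i) * g) a (g i)) ∧
         (b = i ∨ orb (Equiv.swap i (g i) * g) b (g i)))) := by
  set g' := Equiv.swap i (g i) * g with hg'
  set y := orb g' with hy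
  have hg'i : g' i = i := by
    rw [hg']
    simp [Equiv.Perm.mul_apply, Equiv.swap_apply_right]
  have hsing : ∀ k, y i k → k = i := orb_fixed hg'i
  have hsing' : ∀ k, y k i → k = i := fun k hk => hsing k (y.symm hk)
  let E : Setoid (Fin n) :=
    ⟨fun a b => y a b ∨ ((a = i ∨ y a (g i)) ∧ (b = i ∨ y b (g i))),
     ⟨fun a => Or.inl (y.refl a),
      fun {a b} hab => by
        rcases hab with h | ⟨p, q⟩
        · exact Or.inl (y.symm h)
        · exact Or.inr ⟨q, p⟩,
      fun {a b c} hab hbc => by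
        rcases hab with hab | ⟨pa, pb⟩
        · rcases hbc with hbc | ⟨qb, qc⟩
          · exact Or.inl (y.trans hab hbc)
          · refine Or.inr ⟨?_, qc⟩
            rcases qb with rfl | hbj
            · exact Or.inl (hsing' a hab)
            · exact Or.inr (y.trans hab hbj)
        · rcases hbc with hbc | ⟨qb, qc⟩
          · refine Or.inr ⟨pa, ?_⟩
            rcases pb with rfl | hbj
            · exact Or.inl (hsing c hbc)
            · exact Or.inr (y.trans (y.symm hbc) hbj)
          · exact Or.inr ⟨pa, qc⟩⟩⟩
  have h1 : orb g ≤ E := by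
    apply orb_le_iff.mpr
    intro k
    show y k (g k) ∨ ((k = i ∨ y k (g i)) ∧ (g k = i ∨ y (g k) (g i)))
    by_cases hk1 : g k = i
    · refine Or.inr ⟨Or.inr ?_, Or.inl hk1⟩
      have h2 := orb_rel g' k
      have h3 : g' k = g i := by
        rw [hg']
        show Equiv.swap i (g i) (g k) = g i
        rw [hk1, Equiv.swap_apply_left]
      rw [h3] at h2
      exact h2
    by_cases hk2 : g k = g i
    · have hki : k = i := g.injective hk2
      subst hki
      exact Or.inr ⟨Or.inl rfl, Or.inr (y.refl (g k))⟩
    · apply Or.inl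
      have h2 := orb_rel g' k
      have h3 : g' k = g k := by
        rw [hg']
        show Equiv.swap i (g i) (g k) = g k
        exact Equiv.swap_apply_of_ne_of_ne hk1 hk2
      rw [h3] at h2
      exact h2
  have hyle : y ≤ orb g := by
    rw [hy]
    apply orb_le_iff.mpr
    intro k
    by_cases hk1 : g k = i
    · have h3 : g' k = g i := by
        rw [hg']
        show Equiv.swap i (g i) (g k) = g i
        rw [hk1, Equiv.swap_apply_left]
      rw [h3]
      have h4 := orb_rel g k
      rw [hk1] at h4
      exact (orb g).trans h4 (orb_rel g i)
    by_cases hk2 : g k = g i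
    · have h3 : g' k = i := by
        rw [hg']
        show Equiv.swap i (g i) (g k) = i
        rw [hk2, Equiv.swap_apply_right]
      rw [h3]
      have h4 := orb_rel g k
      rw [hk2] at h4
      exact (orb g).trans h4 ((orb g).symm (orb_rel g i))
    · have h3 : g' k = g k := by
        rw [hg']
        show Equiv.swap i (g i) (g k) = g k
        exact Equiv.swap_apply_of_ne_of_ne hk1 hk2
      rw [h3]
      exact orb_rel g k
  have h2 : E ≤ orb g := by
    rw [Setoid.le_def]
    intro a b hab
    rcases hab with hab | ⟨pa, pb⟩
    · exact Setoid.le_def.mp hyle hab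
    · have hDa : orb g a (g i) := by
        rcases pa with rfl | h
        · exact orb_rel g a
        · exact Setoid.le_def.mp hyle h
      have hDb : orb g b (g i) := by
        rcases pb with rfl | h
        · exact orb_rel g b
        · exact Setoid.le_def.mp hyle h
      exact (orb g).trans hDa ((orb g).symm hDb)
  have hEq : orb g = E := le_antisymm h1 h2
  intro a b
  rw [hEq]
  exact Iff.rfl

lemma nblocks_join {y : Setoid (Fin n)} {i j : Fin n} (hij : i ≠ j)
    (hsing : ∀ k, y i k → k = i) {z : Setoid (Fin n)}
    (hz : ∀ a b, z a b ↔ (y a b ∨ ((a = i ∨ y a j) ∧ (b = i ∨ y b j)))) :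
    nblocks z + 1 = nblocks y := by
  set C : Fin n → Finset (Fin n) := fun k => univ.filter (fun l => y k l) with hC
  set Cz : Fin n → Finset (Fin n) := fun k => univ.filter (fun l => z k l) with hCz0
  have hmemC : ∀ k l, l ∈ C k ↔ y k l := by
    intro k l; rw [hC]; simp
  have hmemCz : ∀ k l, l ∈ Cz k ↔ z k l := by
    intro k l; rw [hCz0]; simp
  have hCik : ∀ k, i ∈ C k → k = i := by
    intro k hk
    exact hsing k (y.symm ((hmemC k i).mp hk))
  have hnyij : ¬ y i j := fun h => hij (hsing j h).symm
  set φ : Finset (Fin n) → Finset (Fin n) :=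
    fun B => if B = C i ∨ B = C j then C i ∪ C j else B with hφ
  have hCeqj : ∀ k, y k j → C k = C j := by
    intro k hk
    ext l
    rw [hmemC, hmemC]
    exact ⟨fun h => y.trans (y.symm hk) h, fun h => y.trans hk h⟩
  have hCz : ∀ k, Cz k = φ (C k) := by
    intro k
    by_cases hD : k = i ∨ y k j
    · have h1 : C k = C i ∨ C k = C j := by
        rcases hD with rfl | h
        · exact Or.inl rfl
        · exact Or.inr (hCeqj k h)
      rw [hφ]
      simp only [if_pos h1]
      ext l
      rw [hmemCz, hz, Finset.mem_union, hmemC, hmemC]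
      constructor
      · rintro (hkl | ⟨_, (hli | hlj)⟩)
        · rcases hD with rfl | hkj
          · exact Or.inl hkl
          · exact Or.inr (y.trans (y.symm hkj) hkl)
        · exact Or.inl (by rw [hli])
        · exact Or.inr (y.symm hlj)
      · rintro (hil | hjl)
        · have : l = i := hsing l hil
          exact Or.inr ⟨hD, Or.inl this⟩
        · exact Or.inr ⟨hD, Or.inr (y.symm hjl)⟩
    · have h1 : ¬(C k = C i ∨ C k = C j) := by
        rintro (h | h)
        · apply hD
          left
          apply hCik k
          rw [h, hmemC]
        · apply hD
          right
          have : j ∈ C k := by rw [h, hmemC]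
          exact (hmemC k j).mp this
      rw [hφ]
      simp only [if_neg h1]
      ext l
      rw [hmemCz, hz, hmemC]
      constructor
      · rintro (h | ⟨p, _⟩)
        · exact h
        · exact absurd p hD
      · exact fun h => Or.inl h
  have himage : univ.image Cz = (univ.image C).image φ := by
    rw [Finset.image_image]
    apply Finset.image_congr
    intro k _
    exact hCz k
  set A := univ.image C with hA
  have hCiA : C i ∈ A := Finset.mem_image_of_mem C (mem_univ i)
  have hCjA : C j ∈ A := Finset.mem_image_of_mem C (mem_univ j)
  have hmemCi : ∀ l, l ∈ C i → l = i := by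
    intro l hl; exact hsing l ((hmemC i l).mp hl)
  have hCij : C i ≠ C j := by
    intro h
    apply hnyij
    have : j ∈ C i := by rw [h, hmemC]
    exact (hmemC i j).mp this
  have hBA : ∀ B ∈ A, i ∈ B → B = C i := by
    intro B hB hiB
    obtain ⟨k, _, rfl⟩ := Finset.mem_image.mp hB
    rw [hCik k hiB]
  have hφi : φ (C i) = C i ∪ C j := by rw [hφ]; simp
  have hφj : φ (C j) = C i ∪ C j := by rw [hφ]; simp
  have himg2 : A.image φ = (A.erase (C i)).image φ := by
    conv_lhs => rw [← Finset.insert_erase hCiA]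
    rw [Finset.image_insert]
    apply Finset.insert_eq_self.mpr
    rw [hφi, ← hφj]
    apply Finset.mem_image_of_mem
    rw [Finset.mem_erase]
    exact ⟨Ne.symm hCij, hCjA⟩
  have hinj : Set.InjOn φ (A.erase (C i)) := by
    intro B hB B' hB' hBB'
    simp only [Finset.coe_erase, Set.mem_diff, Finset.mem_coe, Set.mem_singleton_iff] at hB hB'
    by_cases hBj : B = C j
    · by_cases hB'j : B' = C j
      · rw [hBj, hB'j]
      · have hφB' : φ B' = B' := by
          rw [hφ]; exact if_neg (by rintro (h | h); exact hB'.2 h; exact hB'j h)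
        rw [hBj, hφj, hφB'] at hBB'
        exfalso
        apply hB'.2
        apply hBA B' hB'.1
        rw [← hBB']
        apply Finset.mem_union_left
        rw [hmemC]
    · have hφB : φ B = B := by
        rw [hφ]; exact if_neg (by rintro (h | h); exact hB.2 h; exact hBj h)
      by_cases hB'j : B' = C j
      · rw [hφB, hB'j, hφj] at hBB'
        exfalso
        apply hB.2
        apply hBA B hB.1
        rw [hBB']
        apply Finset.mem_union_left
        rw [hmemC]
      · have hφB' : φ B' = B' := by
          rw [hφ]; exact if_neg (by rintro (h | h); exact hB'.2 h; exact hB'j h)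
        rw [hφB, hφB'] at hBB'
        exact hBB'
  have hcount : nblocks z = A.card - 1 := by
    unfold nblocks
    rw [show (univ.image fun k => univ.filter (fun l => z k l)) = univ.image Cz from rfl]
    rw [himage, himg2, Finset.card_image_of_injOn hinj, Finset.card_erase_of_mem hCiA]
  have hpos : 0 < A.card := Finset.card_pos.mpr ⟨C i, hCiA⟩
  have : nblocks y = A.card := rfl
  omega

lemma sgn_eq_aux (N : ℕ) : ∀ (g : Equiv.Perm (Fin n)),
    (univ.filter (fun k => g k ≠ k)).card ≤ N →
    sgn g = (-1 : ℚ) ^ (n - nblocks (orb g)) := by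
  induction N with
  | zero =>
    intro g hg
    have hid : ∀ k, g k = k := by
      intro k
      by_contra hk
      have hmem : k ∈ univ.filter (fun k => g k ≠ k) := by simp [hk]
      have := Finset.card_pos.mpr ⟨k, hmem⟩
      omega
    have hg1 : g = 1 := Equiv.ext hid
    subst hg1
    rw [orb_one, nblocks_bot]
    simp [sgn]
  | succ N ih =>
    intro g hg
    by_cases hid : ∀ k, g k = k
    · have hg1 : g = 1 := Equiv.ext hid
      subst hg1
      rw [orb_one, nblocks_bot]
      simp [sgn]
    · push_neg at hid
      obtain ⟨i, hi⟩ := hid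
      have hij : i ≠ g i := Ne.symm hi
      set g' := Equiv.swap i (g i) * g with hg'
      have hg'i : g' i = i := by
        rw [hg']
        simp [Equiv.Perm.mul_apply, Equiv.swap_apply_right]
      have hfix : ∀ k, g k = k → g' k = k := by
        intro k hk
        have hki : k ≠ i := by rintro rfl; exact hi hk
        have hkj : k ≠ g i := by
          rintro hkgi
          exact hki (g.injective (hk.trans hkgi))
        rw [hg']
        show Equiv.swap i (g i) (g k) = k
        rw [hk]
        exact Equiv.swap_apply_of_ne_of_ne hki hkj
      have hsub : (univ.filter (fun k => g' k ≠ k))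
          ⊆ (univ.filter (fun k => g k ≠ k)).erase i := by
        intro k hk
        simp only [mem_filter, mem_univ, true_and] at hk
        rw [Finset.mem_erase]
        constructor
        · rintro rfl; exact hk hg'i
        · simp only [mem_filter, mem_univ, true_and]
          intro hgk
          exact hk (hfix k hgk)
      have hmem : i ∈ univ.filter (fun k => g k ≠ k) := by simp [hi]
      have hcard : (univ.filter (fun k => g' k ≠ k)).card ≤ N := by
        have h1 := Finset.card_le_card hsub
        rw [Finset.card_erase_of_mem hmem] at h1
        have h2 := Finset.card_pos.mpr ⟨i, hmem⟩
        omega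
      have ihg' := ih g' hcard
      have hsing : ∀ k, orb g' i k → k = i := orb_fixed hg'i
      have hnb : nblocks (orb g) + 1 = nblocks (orb g') :=
        nblocks_join hij hsing (orb_swap_mul hi)
      have hsgn' : sgn g' = - sgn g := sgn_mul_swap hij g
      have hsgn : sgn g = - sgn g' := by rw [hsgn']; ring
      rw [hsgn, ihg']
      have hb' : nblocks (orb g') ≤ n := nblocks_le _
      have hexp : n - nblocks (orb g) = (n - nblocks (orb g')) + 1 := by omega
      rw [hexp, pow_succ]
      ring

lemma sgn_eq (g : Equiv.Perm (Fin n)) : sgn g = (-1 : ℚ) ^ (n - nblocks (orb g)) :=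
  sgn_eq_aux _ g le_rfl

lemma nu_ne_zero (x : Setoid (Fin n)) : nu x ≠ 0 := by
  have hconst : ∀ g ∈ univ.filter (fun g : Equiv.Perm (Fin n) => orb g = x),
      sgn g = (-1 : ℚ) ^ (n - nblocks x) := by
    intro g hg
    rw [sgn_eq, (mem_filter.mp hg).2]
  unfold nu
  rw [Finset.sum_congr rfl hconst, Finset.sum_const]
  have hne : cycPerm x ∈ univ.filter (fun g : Equiv.Perm (Fin n) => orb g = x) := by
    simp [orb_cycPerm]
  intro hzero
  rw [nsmul_eq_mul] at hzero
  rcases mul_eq_zero.mp hzero with h | h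
  · exact Finset.card_ne_zero_of_mem hne (by exact_mod_cast h)
  · exact pow_ne_zero _ (by norm_num : (-1 : ℚ) ≠ 0) h

end Sign

section Span

def SpanE (F : NCF n) : Prop :=
  ∃ a : Setoid (Fin n) → ℚ, F = ∑ τ : Setoid (Fin n), a τ • eFun τ

lemma spanE_eFun (τ : Setoid (Fin n)) : SpanE (eFun τ) := by
  refine ⟨fun σ => if σ = τ then 1 else 0, ?_⟩
  funext w
  rw [Finset.sum_apply]
  rw [Finset.sum_eq_single τ]
  · simp
  · intro b _ hb; simp [hb]
  · intro h; exact absurd (mem_univ τ) h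

lemma spanE_zero : SpanE (0 : NCF n) := ⟨0, by simp⟩

lemma spanE_add {F G : NCF n} (hF : SpanE F) (hG : SpanE G) : SpanE (F + G) := by
  obtain ⟨a, ha⟩ := hF
  obtain ⟨b, hb⟩ := hG
  refine ⟨a + b, ?_⟩
  rw [ha, hb, ← Finset.sum_add_distrib]
  apply Finset.sum_congr rfl
  intro τ _
  rw [Pi.add_apply, add_smul]

lemma spanE_smul {F : NCF n} (c : ℚ) (hF : SpanE F) : SpanE (c • F) := by
  obtain ⟨a, ha⟩ := hF
  refine ⟨fun τ => c * a τ, ?_⟩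
  rw [ha, Finset.smul_sum]
  apply Finset.sum_congr rfl
  intro τ _
  rw [mul_smul]

lemma spanE_sub {F G : NCF n} (hF : SpanE F) (hG : SpanE G) : SpanE (F - G) := by
  have h1 : F - G = F + (-1 : ℚ) • G := by
    funext w; simp; ring
  rw [h1]
  exact spanE_add hF (spanE_smul _ hG)

lemma spanE_sum {ι : Type*} (s : Finset ι) (f : ι → NCF n) (h : ∀ i ∈ s, SpanE (f i)) :
    SpanE (∑ i ∈ s, f i) := by
  induction s using Finset.cons_induction with
  | empty => simpa using spanE_zero
  | cons i s his ih =>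
    rw [Finset.sum_cons]
    exact spanE_add (h i (Finset.mem_cons_self i s))
      (ih fun j hj => h j (Finset.mem_cons.mpr (Or.inr hj)))

lemma eFun_eq_sum_pFun (x : Setoid (Fin n)) :
    eFun x = ∑ ρ ∈ Iic x, nu ρ • pFun ρ := by
  funext w
  rw [Finset.sum_apply, eFun_apply]
  have h1 : ∀ ρ ∈ Iic x, (nu ρ • pFun ρ) w = if ρ ≤ kerS w then nu ρ else 0 := by
    intro ρ _
    rw [Pi.smul_apply, pFun_apply]
    split_ifs <;> simp
  rw [Finset.sum_congr rfl h1, ← Finset.sum_filter]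
  have h2 : (Iic x).filter (fun ρ => ρ ≤ kerS w) = Iic (x ⊓ kerS w) := by
    ext ρ
    simp [mem_Iic, le_inf_iff]
  rw [h2, sum_nu_Iic]

lemma spanE_pFun (x : Setoid (Fin n)) : SpanE (pFun x) := by
  have hwf : WellFounded ((· < ·) : Setoid (Fin n) → Setoid (Fin n) → Prop) :=
    IsWellFounded.wf
  refine hwf.induction (C := fun x => SpanE (pFun x)) x ?_
  intro x ih
  have hsplit : ∑ ρ ∈ Iic x, nu ρ • pFun ρ
      = nu x • pFun x + ∑ ρ ∈ (Iic x).erase x, nu ρ • pFun ρ :=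
    (Finset.add_sum_erase _ _ (mem_Iic.mpr le_rfl)).symm
  have hEq : pFun x = (nu x)⁻¹ • (eFun x - ∑ ρ ∈ (Iic x).erase x, nu ρ • pFun ρ) := by
    rw [eFun_eq_sum_pFun x, hsplit, add_sub_cancel_right]
    rw [smul_smul, inv_mul_cancel₀ (nu_ne_zero x), one_smul]
  rw [hEq]
  apply spanE_smul
  apply spanE_sub (spanE_eFun x)
  apply spanE_sum
  intro ρ hρ
  rw [Finset.mem_erase, mem_Iic] at hρ
  exact spanE_smul _ (ih ρ (lt_of_le_of_ne hρ.2 hρ.1))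

lemma pFun_eq_sum (x : Setoid (Fin n)) :
    pFun x = mFun x + ∑ τ ∈ univ.filter (fun τ => x < τ), mFun τ := by
  funext w
  rw [Pi.add_apply, Finset.sum_apply, pFun_apply, mFun_apply]
  by_cases h : x ≤ kerS w
  · by_cases he : kerS w = x
    · rw [if_pos h, if_pos he]
      have hz : ∀ τ ∈ univ.filter (fun τ => x < τ), mFun τ w = 0 := by
        intro τ hτ
        rw [mem_filter] at hτ
        rw [mFun_apply, if_neg]
        intro hk
        rw [he] at hk
        exact absurd (hk ▸ hτ.2) (lt_irrefl _)
      rw [Finset.sum_congr rfl hz, Finset.sum_const_zero, add_zero]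
    · rw [if_pos h, if_neg he, zero_add]
      have hlt : x < kerS w := lt_of_le_of_ne h (fun hh => he hh.symm)
      rw [Finset.sum_eq_single (kerS w)]
      · rw [mFun_apply, if_pos rfl]
      · intro τ _ hne
        rw [mFun_apply, if_neg (fun hh => hne hh.symm)]
      · intro hnm
        exact absurd (mem_filter.mpr ⟨mem_univ _, hlt⟩) hnm
  · rw [if_neg h]
    have hz : ∀ τ ∈ univ.filter (fun τ => x < τ), mFun τ w = 0 := by
      intro τ hτ
      rw [mem_filter] at hτ
      rw [mFun_apply, if_neg]
      intro hk
      apply h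
      rw [hk]
      exact hτ.2.le
    rw [Finset.sum_congr rfl hz, Finset.sum_const_zero, add_zero]
    rw [if_neg (fun hk : kerS w = x => h hk.ge)]

lemma spanE_mFun (x : Setoid (Fin n)) : SpanE (mFun x) := by
  have hwf : WellFounded ((· > ·) : Setoid (Fin n) → Setoid (Fin n) → Prop) :=
    IsWellFounded.wf
  refine hwf.induction (C := fun x => SpanE (mFun x)) x ?_
  intro x ih
  have hEq : mFun x = pFun x - ∑ τ ∈ univ.filter (fun τ => x < τ), mFun τ := by
    rw [pFun_eq_sum x, add_sub_cancel_right]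
  rw [hEq]
  exact spanE_sub (spanE_pFun x)
    (spanE_sum _ _ (fun τ hτ => ih τ (mem_filter.mp hτ).2))

lemma self_mem_block (σ : Setoid (Fin n)) (i : Fin n) :
    i ∈ univ.filter (fun j => σ i j) := by
  rw [mem_filter]; exact ⟨mem_univ i, σ.refl i⟩

lemma min'_congr {α : Type*} [LinearOrder α] {s t : Finset α} (h : s = t) (hs : s.Nonempty) :
    s.min' hs = t.min' (h ▸ hs) := by subst h; rfl

noncomputable def canon (σ : Setoid (Fin n)) : Fin n → ℕ :=
  fun i => ((univ.filter (fun j => σ i j)).min' ⟨i, self_mem_block σ i⟩ : Fin n).val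

lemma canon_ker (σ : Setoid (Fin n)) (i j : Fin n) : canon σ i = canon σ j ↔ σ i j := by
  constructor
  · intro h
    have hi := Finset.min'_mem (univ.filter (fun k => σ i k))
      ⟨i, self_mem_block σ i⟩
    have hj := Finset.min'_mem (univ.filter (fun k => σ j k))
      ⟨j, self_mem_block σ j⟩
    rw [mem_filter] at hi hj
    have hv : (univ.filter (fun k => σ i k)).min' ⟨i, self_mem_block σ i⟩
        = (univ.filter (fun k => σ j k)).min' ⟨j, self_mem_block σ j⟩ :=
      Fin.val_injective h
    refine σ.trans hi.2 (σ.symm ?_)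
    rw [hv]
    exact hj.2
  · intro h
    have hset : univ.filter (fun k => σ i k) = univ.filter (fun k => σ j k) := by
      ext k
      simp only [mem_filter, mem_univ, true_and]
      exact ⟨fun h' => σ.trans (σ.symm h) h', fun h' => σ.trans h h'⟩
    unfold canon
    exact congrArg Fin.val (min'_congr hset _)

lemma spanE_of_invariant (F : NCF n)
    (hF : ∀ w w' : Fin n → ℕ, (∀ i j, w i = w j ↔ w' i = w' j) → F w = F w') :
    SpanE F := by
  have hrep : F = ∑ σ : Setoid (Fin n), F (canon σ) • mFun σ := by
    funext w
    rw [Finset.sum_apply]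
    rw [Finset.sum_eq_single (kerS w)]
    · rw [Pi.smul_apply, mFun_apply, if_pos rfl, smul_eq_mul, mul_one]
      apply hF
      intro i j
      exact (canon_ker (kerS w) i j).symm
    · intro σ _ hne
      rw [Pi.smul_apply, mFun_apply, if_neg (fun h : kerS w = σ => hne h.symm), smul_zero]
    · intro h; exact absurd (mem_univ _) h
  rw [hrep]
  exact spanE_sum _ _ (fun σ _ => spanE_smul _ (spanE_mFun σ))

end Span

section Conj

def conj (s : Equiv.Perm (Fin n)) (σ : Setoid (Fin n)) : Setoid (Fin n) :=
  ⟨fun a b => σ (s a) (s b),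
   ⟨fun a => σ.refl (s a), fun h => σ.symm h, fun h h' => σ.trans h h'⟩⟩

lemma conj_conj (s : Equiv.Perm (Fin n)) (hs : ∀ a, s (s a) = a) (σ : Setoid (Fin n)) :
    conj s (conj s σ) = σ := by
  apply Setoid.ext
  intro a b
  show σ (s (s a)) (s (s b)) ↔ σ a b
  rw [hs, hs]

lemma conj_bijective (s : Equiv.Perm (Fin n)) (hs : ∀ a, s (s a) = a) :
    Function.Bijective (conj s) :=
  Function.Involutive.bijective (fun σ => conj_conj s hs σ)

lemma eFun_conj (s : Equiv.Perm (Fin n)) (σ : Setoid (Fin n)) (w : Fin n → ℕ) :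
    eFun (conj s σ) w = eFun σ (w ∘ s.symm) := by
  unfold eFun
  refine if_congr ?_ rfl rfl
  constructor
  · intro h i j hij hσ
    apply h (s.symm i) (s.symm j) (fun hc => hij (s.symm.injective hc))
    show σ (s (s.symm i)) (s (s.symm j))
    rw [Equiv.apply_symm_apply, Equiv.apply_symm_apply]
    exact hσ
  · intro h a b hab hσ
    have := h (s a) (s b) (fun hc => hab (s.injective hc)) hσ
    simpa using this

lemma blockCard_conj (s : Equiv.Perm (Fin n)) (σ : Setoid (Fin n)) (i : Fin n) :
    blockCard (conj s σ) i = blockCard σ (s i) := by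
  unfold blockCard
  apply Finset.card_bij (fun j _ => s j)
  · intro j hj
    rw [mem_filter] at hj ⊢
    exact ⟨mem_univ _, hj.2⟩
  · intro a _ b _ hab
    exact s.injective hab
  · intro k hk
    rw [mem_filter] at hk
    refine ⟨s.symm k, ?_, Equiv.apply_symm_apply s k⟩
    rw [mem_filter]
    refine ⟨mem_univ _, ?_⟩
    show σ (s i) (s (s.symm k))
    rw [Equiv.apply_symm_apply]
    exact hk.2

lemma sizes_conj (s : Equiv.Perm (Fin n)) (σ : Setoid (Fin n)) :
    sizes (conj s σ) = sizes σ := by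
  unfold sizes
  have h1 : (fun i : Fin n => univ.filter (fun j => conj s σ i j))
      = fun i => (univ.filter (fun j => σ (s i) j)).image s.symm := by
    funext i
    ext k
    simp only [mem_filter, mem_univ, true_and, Finset.mem_image]
    constructor
    · intro h
      exact ⟨s k, h, s.symm_apply_apply k⟩
    · rintro ⟨l, hl, rfl⟩
      show σ (s i) (s (s.symm l))
      rw [Equiv.apply_symm_apply]
      exact hl
  rw [h1]
  have h2 : univ.image (fun i => (univ.filter (fun j => σ (s i) j)).image ⇑s.symm)
      = (univ.image (fun i => univ.filter (fun j => σ i j))).image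
          (fun B => B.image ⇑s.symm) := by
    ext B
    simp only [Finset.mem_image, mem_univ, true_and]
    constructor
    · rintro ⟨i, rfl⟩
      exact ⟨univ.filter (fun j => σ (s i) j), ⟨s i, rfl⟩, rfl⟩
    · rintro ⟨B', ⟨k, rfl⟩, rfl⟩
      refine ⟨s.symm k, ?_⟩
      rw [Equiv.apply_symm_apply]
  rw [h2]
  have hinj : Function.Injective (fun B : Finset (Fin n) => B.image ⇑s.symm) :=
    Finset.image_injective s.symm.injective
  rw [Finset.image_val_of_injOn (hinj.injOn)]
  rw [Multiset.map_map]
  apply Multiset.map_congr rfl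
  intro B _
  exact Finset.card_image_of_injective B s.symm.injective

lemma cls_conj {i : Fin n} (s : Equiv.Perm (Fin n)) (hsi : s i = i) (σ τ : Setoid (Fin n)) :
    cls i (conj s σ) τ ↔ cls i σ τ := by
  unfold cls
  rw [sizes_conj, blockCard_conj, hsi]

end Conj

section AddLast

variable {d : ℕ}

lemma rel_addSingleton (π : Setoid (Fin (d+1))) (x y : Fin (d+2)) :
    addSingleton π x y ↔
      (x = y ∨ ∃ (hx : (x:ℕ) < d+1) (hy : (y:ℕ) < d+1), π ⟨x,hx⟩ ⟨y,hy⟩) := by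
  constructor
  · intro h
    rcases h with rfl | ⟨hx, hy, h⟩ | ⟨hx', hy'⟩
    · exact Or.inl rfl
    · exact Or.inr ⟨hx, hy, h⟩
    · rcases hx' with ⟨hx, hπx⟩ | ⟨_, hF⟩
      · rcases hy' with ⟨hy, hπy⟩ | ⟨_, hF⟩
        · exact Or.inr ⟨hx, hy, π.trans hπx (π.symm hπy)⟩
        · exact hF.elim
      · exact hF.elim
  · rintro (rfl | ⟨hx, hy, h⟩)
    · exact Or.inl rfl
    · exact Or.inr (Or.inl ⟨hx, hy, h⟩)

lemma rel_addLast (π : Setoid (Fin (d+1))) (x y : Fin (d+2)) :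
    addLast π x y ↔
      (x = y ∨ (∃ (hx : (x:ℕ) < d+1) (hy : (y:ℕ) < d+1), π ⟨x,hx⟩ ⟨y,hy⟩) ∨
        (((∃ hx : (x:ℕ) < d+1, π ⟨x,hx⟩ (Fin.last d)) ∨ x = Fin.last (d+1)) ∧
         ((∃ hy : (y:ℕ) < d+1, π ⟨y,hy⟩ (Fin.last d)) ∨ y = Fin.last (d+1)))) := by
  have hlastiff : ∀ z : Fin (d+2), d + 1 ≤ (z:ℕ) ↔ z = Fin.last (d+1) := by
    intro z
    constructor
    · intro hz
      apply Fin.ext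
      have := z.isLt
      simp only [Fin.val_last]
      omega
    · rintro rfl
      simp
  constructor
  · intro h
    rcases h with rfl | ⟨hx, hy, h⟩ | ⟨hx', hy'⟩
    · exact Or.inl rfl
    · exact Or.inr (Or.inl ⟨hx, hy, h⟩)
    · refine Or.inr (Or.inr ⟨?_, ?_⟩)
      · rcases hx' with h | ⟨h, _⟩
        · exact Or.inl h
        · exact Or.inr ((hlastiff x).mp h)
      · rcases hy' with h | ⟨h, _⟩
        · exact Or.inl h
        · exact Or.inr ((hlastiff y).mp h)
  · rintro (rfl | ⟨hx, hy, h⟩ | ⟨hx', hy'⟩)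
    · exact Or.inl rfl
    · exact Or.inr (Or.inl ⟨hx, hy, h⟩)
    · refine Or.inr (Or.inr ⟨?_, ?_⟩)
      · rcases hx' with h | h
        · exact Or.inl h
        · exact Or.inr ⟨(hlastiff x).mpr h, trivial⟩
      · rcases hy' with h | h
        · exact Or.inl h
        · exact Or.inr ⟨(hlastiff y).mpr h, trivial⟩

lemma mk_castSucc (i : Fin (d+1)) (h : ((i.castSucc : Fin (d+2)) : ℕ) < d+1) :
    (⟨((i.castSucc : Fin (d+2)) : ℕ), h⟩ : Fin (d+1)) = i := by
  apply Fin.ext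
  simp

lemma castSucc_lt (i : Fin (d+1)) : ((i.castSucc : Fin (d+2)) : ℕ) < d + 1 := by
  simp
  have := i.isLt; omega

lemma eFun_addSingleton (π : Setoid (Fin (d+1))) (w : Fin (d+2) → ℕ) :
    eFun (addSingleton π) w = eFun π (fun i => w i.castSucc) := by
  unfold eFun
  refine if_congr ?_ rfl rfl
  constructor
  · intro h i j hij hπ
    apply h i.castSucc j.castSucc (fun hc => hij (Fin.castSucc_injective _ hc))
    rw [rel_addSingleton]
    refine Or.inr ⟨castSucc_lt i, castSucc_lt j, ?_⟩
    rw [mk_castSucc, mk_castSucc]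
    exact hπ
  · intro h x y hxy hrel
    rw [rel_addSingleton] at hrel
    rcases hrel with rfl | ⟨hx, hy, hπ⟩
    · exact absurd rfl hxy
    · have hxi : x = (⟨(x:ℕ), hx⟩ : Fin (d+1)).castSucc := by apply Fin.ext; simp
      have hyj : y = (⟨(y:ℕ), hy⟩ : Fin (d+1)).castSucc := by apply Fin.ext; simp
      rw [hxi, hyj]
      apply h
      · intro hc
        apply hxy
        rw [hxi, hyj, hc]
      · exact hπ

lemma eFun_addLast (π : Setoid (Fin (d+1))) (w : Fin (d+2) → ℕ) :
    eFun (addLast π) w =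
      if ((∀ i j : Fin (d+1), i ≠ j → π i j → w i.castSucc ≠ w j.castSucc) ∧
          (∀ k : Fin (d+1), π k (Fin.last d) → w (Fin.last (d+1)) ≠ w k.castSucc))
      then 1 else 0 := by
  unfold eFun
  refine if_congr ?_ rfl rfl
  have hcne : ∀ k : Fin (d+1), Fin.last (d+1) ≠ k.castSucc := by
    intro k hc
    have h1 : (Fin.last (d+1) : ℕ) = d+1 := rfl
    have h2 := castSucc_lt k
    rw [hc] at h1
    omega
  constructor
  · intro h
    constructor
    · intro i j hij hπ
      apply h i.castSucc j.castSucc (fun hc => hij (Fin.castSucc_injective _ hc))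
      rw [rel_addLast]
      refine Or.inr (Or.inl ⟨castSucc_lt i, castSucc_lt j, ?_⟩)
      rw [mk_castSucc, mk_castSucc]
      exact hπ
    · intro k hk
      apply h (Fin.last (d+1)) k.castSucc (hcne k)
      rw [rel_addLast]
      refine Or.inr (Or.inr ⟨Or.inr rfl, Or.inl ⟨castSucc_lt k, ?_⟩⟩)
      rw [mk_castSucc]
      exact hk
  · rintro ⟨h1, h2⟩ x y hxy hrel
    rw [rel_addLast] at hrel
    have hcast : ∀ (z : Fin (d+2)) (hz : (z:ℕ) < d+1), z = (⟨(z:ℕ), hz⟩ : Fin (d+1)).castSucc := by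
      intro z hz; apply Fin.ext; simp
    rcases hrel with rfl | ⟨hx, hy, hπ⟩ | ⟨hx', hy'⟩
    · exact absurd rfl hxy
    · rw [hcast x hx, hcast y hy]
      apply h1
      · intro hc
        apply hxy
        rw [hcast x hx, hcast y hy, hc]
      · exact hπ
    · rcases hx' with ⟨hx, hπx⟩ | rfl
      · rcases hy' with ⟨hy, hπy⟩ | rfl
        · rw [hcast x hx, hcast y hy]
          apply h1
          · intro hc
            apply hxy
            rw [hcast x hx, hcast y hy, hc]
          · exact π.trans hπx (π.symm hπy)
        · rw [hcast x hx]
          exact (h2 ⟨(x:ℕ), hx⟩ hπx).symm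
      · rcases hy' with ⟨hy, hπy⟩ | rfl
        · rw [hcast y hy]
          exact h2 ⟨(y:ℕ), hy⟩ hπy
        · exact absurd rfl hxy

lemma star_identity (π : Setoid (Fin (d+1))) (w : Fin (d+2) → ℕ) :
    ∑ j ∈ univ.filter (fun j => π (Fin.last d) j),
      (if w (Fin.last (d+1)) = w j.castSucc then eFun π (fun i => w i.castSucc) else 0)
      = eFun (addSingleton π) w - eFun (addLast π) w := by
  rw [eFun_addSingleton, eFun_addLast]
  by_cases hP : ∀ i j : Fin (d+1), i ≠ j → π i j → w i.castSucc ≠ w j.castSucc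
  · have hE : eFun π (fun i => w i.castSucc) = 1 := by
      unfold eFun
      exact if_pos hP
    rw [hE]
    by_cases hc3 : ∀ k : Fin (d+1), π k (Fin.last d) → w (Fin.last (d+1)) ≠ w k.castSucc
    · rw [if_pos ⟨hP, hc3⟩]
      have hz : ∀ j ∈ univ.filter (fun j => π (Fin.last d) j),
          (if w (Fin.last (d+1)) = w j.castSucc then (1:ℚ) else 0) = 0 := by
        intro j hj
        rw [mem_filter] at hj
        rw [if_neg (hc3 j (π.symm hj.2))]
      rw [Finset.sum_congr rfl hz, Finset.sum_const_zero]
      norm_num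
    · rw [if_neg (fun hh => hc3 hh.2)]
      push_neg at hc3
      obtain ⟨k, hk, hwk⟩ := hc3
      rw [Finset.sum_eq_single k]
      · rw [if_pos hwk]
        norm_num
      · intro j hj hjk
        rw [mem_filter] at hj
        rw [if_neg]
        intro hwj
        exact hP j k hjk (π.trans (π.symm hj.2) (π.symm hk)) (hwj.symm.trans hwk)
      · intro hnm
        exact absurd (mem_filter.mpr ⟨mem_univ _, π.symm hk⟩) hnm
  · have hE : eFun π (fun i => w i.castSucc) = 0 := by
      unfold eFun
      exact if_neg hP
    rw [hE]
    have hz : ∀ j ∈ univ.filter (fun j => π (Fin.last d) j),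
        (if w (Fin.last (d+1)) = w j.castSucc then (0:ℚ) else 0) = 0 := by
      intro j _
      split_ifs <;> rfl
    rw [Finset.sum_congr rfl hz, Finset.sum_const_zero]
    rw [if_neg (fun hh : _ ∧ _ => hP hh.1)]
    norm_num

end AddLast

section Main

variable {d : ℕ}

lemma spanE_up (π : Setoid (Fin (d+1))) : SpanE (up (eFun π)) := by
  apply spanE_of_invariant
  intro w w' h
  unfold up
  have hcond : (w (Fin.last (d+1)) = w ⟨d, by omega⟩) ↔
      (w' (Fin.last (d+1)) = w' ⟨d, by omega⟩) := h _ _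
  have hval : eFun π (fun i => w i.castSucc) = eFun π (fun i => w' i.castSucc) := by
    unfold eFun
    refine if_congr ?_ rfl rfl
    constructor
    · intro hh i j hij hπ hc
      exact hh i j hij hπ ((h _ _).mpr hc)
    · intro hh i j hij hπ hc
      exact hh i j hij hπ ((h _ _).mp hc)
  split_ifs with hA hB hB
  · exact hval
  · exact absurd (hcond.mp hA) hB
  · exact absurd (hcond.mpr hB) hA
  · rfl

lemma swap_castSucc (a b i : Fin (d+1)) :
    (Equiv.swap a.castSucc b.castSucc : Equiv.Perm (Fin (d+2))) i.castSucc
      = (Equiv.swap a b i).castSucc := by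
  rcases eq_or_ne i a with rfl | hia
  · rw [Equiv.swap_apply_left, Equiv.swap_apply_left]
  rcases eq_or_ne i b with rfl | hib
  · rw [Equiv.swap_apply_right, Equiv.swap_apply_right]
  · rw [Equiv.swap_apply_of_ne_of_ne (fun hc => hia (Fin.castSucc_injective _ hc))
      (fun hc => hib (Fin.castSucc_injective _ hc)),
      Equiv.swap_apply_of_ne_of_ne hia hib]

lemma swap_castSucc_last (a b : Fin (d+1)) :
    (Equiv.swap a.castSucc b.castSucc : Equiv.Perm (Fin (d+2))) (Fin.last (d+1))
      = Fin.last (d+1) :=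
  Equiv.swap_apply_of_ne_of_ne (Fin.castSucc_lt_last a).ne' (Fin.castSucc_lt_last b).ne'

lemma conj_swap_self {m : ℕ} {σ : Setoid (Fin m)} {i j : Fin m} (h : σ i j) :
    conj (Equiv.swap i j) σ = σ := by
  have hstep : ∀ a, σ (Equiv.swap i j a) a := by
    intro a
    rcases eq_or_ne a i with rfl | hai
    · rw [Equiv.swap_apply_left]; exact σ.symm h
    rcases eq_or_ne a j with rfl | haj
    · rw [Equiv.swap_apply_right]; exact h
    · rw [Equiv.swap_apply_of_ne_of_ne hai haj]
  apply Setoid.ext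
  intro a b
  show σ (Equiv.swap i j a) (Equiv.swap i j b) ↔ σ a b
  constructor
  · intro hab
    exact σ.trans (σ.symm (hstep a)) (σ.trans hab (hstep b))
  · intro hab
    exact σ.trans (hstep a) (σ.trans hab (σ.symm (hstep b)))

lemma final (π : Setoid (Fin (d + 1))) :
    EquivI (Fin.last (d + 1)) (up (eFun π))
      ((1 / (blockCard π (Fin.last d) : ℚ)) • eFun (addSingleton π)
        - (1 / (blockCard π (Fin.last d) : ℚ)) • eFun (addLast π)) := by
  obtain ⟨a, ha⟩ := spanE_up π
  set B : Finset (Fin (d+1)) := univ.filter (fun j => π (Fin.last d) j) with hB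
  have hBcard : B.card = blockCard π (Fin.last d) := rfl
  have hbcpos : 0 < blockCard π (Fin.last d) := by
    rw [← hBcard]
    refine Finset.card_pos.mpr ⟨Fin.last d, ?_⟩
    rw [hB, mem_filter]
    exact ⟨mem_univ _, π.refl _⟩
  set bc : ℚ := (blockCard π (Fin.last d) : ℚ) with hbc
  have hbcne : bc ≠ 0 := by
    rw [hbc]
    exact Nat.cast_ne_zero.mpr (Nat.pos_iff_ne_zero.mp hbcpos)
  set sw : Fin (d+1) → Equiv.Perm (Fin (d+2)) :=
    fun j => Equiv.swap j.castSucc (Fin.last d).castSucc with hsw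
  have hswinv : ∀ j a, sw j (sw j a) = a := fun j a => Equiv.swap_apply_self _ _ _
  have hswlast : ∀ j, sw j (Fin.last (d+1)) = Fin.last (d+1) :=
    fun j => swap_castSucc_last _ _
  have hIj : ∀ j ∈ B, ∀ w : Fin (d+2) → ℕ,
      up (eFun π) (w ∘ (sw j)) =
        (if w (Fin.last (d+1)) = w j.castSucc then eFun π (fun i => w i.castSucc) else 0) := by
    intro j hj w
    unfold up
    have h1 : (w ∘ sw j) (Fin.last (d+1)) = w (Fin.last (d+1)) := by
      show w (sw j (Fin.last (d+1))) = _
      rw [hswlast]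
    have h2 : (w ∘ sw j) ⟨d, by omega⟩ = w j.castSucc := by
      show w (sw j ⟨d, by omega⟩) = _
      have hd : (⟨d, by omega⟩ : Fin (d+2)) = (Fin.last d).castSucc := by
        apply Fin.ext; simp
      rw [hd, hsw]
      rw [Equiv.swap_apply_right]
    have h3 : eFun π (fun i => (w ∘ sw j) i.castSucc) = eFun π (fun i => w i.castSucc) := by
      have h4 : (fun i : Fin (d+1) => (w ∘ sw j) i.castSucc)
          = (fun i : Fin (d+1) => w i.castSucc) ∘ (Equiv.swap j (Fin.last d)) := by
        funext i
        show w (sw j i.castSucc) = w ((Equiv.swap j (Fin.last d) i).castSucc)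
        rw [hsw]
        rw [swap_castSucc]
      rw [h4]
      have h5 := eFun_conj (Equiv.swap j (Fin.last d)) π (fun i : Fin (d+1) => w i.castSucc)
      rw [Equiv.symm_swap] at h5
      rw [← h5]
      have hπj : π j (Fin.last d) := by
        rw [hB, mem_filter] at hj
        exact π.symm hj.2
      rw [conj_swap_self hπj]
    rw [h1, h2, h3]
  have hconjinv : ∀ j (τ : Setoid (Fin (d+2))), conj (sw j) (conj (sw j) τ) = τ :=
    fun j τ => conj_conj (sw j) (hswinv j) τ
  have hbij : ∀ j, Function.Bijective (conj (sw j)) :=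
    fun j => conj_bijective (sw j) (hswinv j)
  refine ⟨a, fun τ => bc⁻¹ * ∑ j ∈ B, a (conj (sw j) τ), ha, ?_, ?_⟩
  · funext w
    rw [Finset.sum_apply]
    have hterm : ∀ τ ∈ (univ : Finset (Setoid (Fin (d+2)))),
        ((bc⁻¹ * ∑ j ∈ B, a (conj (sw j) τ)) • eFun τ) w
          = bc⁻¹ * ∑ j ∈ B, (a (conj (sw j) τ) * eFun τ w) := by
      intro τ _
      rw [Pi.smul_apply, smul_eq_mul, mul_assoc, Finset.sum_mul]
    rw [Finset.sum_congr rfl hterm, ← Finset.mul_sum, Finset.sum_comm]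
    have hinner : ∀ j ∈ B, ∑ τ : Setoid (Fin (d+2)), (a (conj (sw j) τ) * eFun τ w)
        = (if w (Fin.last (d+1)) = w j.castSucc then eFun π (fun i => w i.castSucc) else 0) := by
      intro j hj
      have hre : ∑ τ : Setoid (Fin (d+2)), (a (conj (sw j) τ) * eFun τ w)
          = ∑ τ : Setoid (Fin (d+2)), (a τ * eFun (conj (sw j) τ) w) := by
        apply Fintype.sum_bijective (conj (sw j)) (hbij j)
        intro τ
        rw [hconjinv j τ]
      rw [hre]
      have hre2 : ∀ τ ∈ (univ : Finset (Setoid (Fin (d+2)))),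
          a τ * eFun (conj (sw j) τ) w = a τ * eFun τ (w ∘ sw j) := by
        intro τ _
        have hss : (sw j).symm = sw j := by rw [hsw]; exact Equiv.symm_swap _ _
        rw [eFun_conj, hss]
      rw [Finset.sum_congr rfl hre2]
      have hup : up (eFun π) (w ∘ sw j) = ∑ τ : Setoid (Fin (d+2)), a τ * eFun τ (w ∘ sw j) := by
        rw [ha, Finset.sum_apply]
        apply Finset.sum_congr rfl
        intro τ _
        rw [Pi.smul_apply, smul_eq_mul]
      rw [← hup, hIj j hj w]
    rw [Finset.sum_congr rfl hinner, star_identity]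
    rw [Pi.sub_apply, Pi.smul_apply, Pi.smul_apply, smul_eq_mul, smul_eq_mul]
    rw [eFun_addSingleton]
    rw [one_div]
    ring
  · intro τ0
    have hstep1 : ∀ σ ∈ (univ : Finset (Setoid (Fin (d+2)))),
        (if cls (Fin.last (d+1)) σ τ0 then bc⁻¹ * ∑ j ∈ B, a (conj (sw j) σ) else 0)
          = bc⁻¹ * ∑ j ∈ B, (if cls (Fin.last (d+1)) σ τ0 then a (conj (sw j) σ) else 0) := by
      intro σ _
      split_ifs with hc
      · rw [Finset.mul_sum]
      · rw [Finset.sum_const_zero, mul_zero]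
    rw [Finset.sum_congr rfl hstep1, ← Finset.mul_sum, Finset.sum_comm]
    have hstep2 : ∀ j ∈ B,
        ∑ σ : Setoid (Fin (d+2)), (if cls (Fin.last (d+1)) σ τ0 then a (conj (sw j) σ) else 0)
          = ∑ σ : Setoid (Fin (d+2)), (if cls (Fin.last (d+1)) σ τ0 then a σ else 0) := by
      intro j _
      have hre : ∑ σ : Setoid (Fin (d+2)),
            (if cls (Fin.last (d+1)) σ τ0 then a (conj (sw j) σ) else 0)
          = ∑ σ : Setoid (Fin (d+2)),
            (if cls (Fin.last (d+1)) (conj (sw j) σ) τ0 then a σ else 0) := by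
        apply Fintype.sum_bijective (conj (sw j)) (hbij j)
        intro σ
        rw [hconjinv j σ]
      rw [hre]
      apply Finset.sum_congr rfl
      intro σ _
      rw [if_congr (cls_conj (sw j) (hswlast j) σ τ0) rfl rfl]
    rw [Finset.sum_congr rfl hstep2, Finset.sum_const, hBcard]
    rw [nsmul_eq_mul, ← mul_assoc, ← hbc]
    rw [inv_mul_cancel₀ hbcne, one_mul]

end Main

end UpE
/-- Modulo the congruence `≡_{d+1}`,
`e_π↑ ≡ (1/b) e_{(π/d+1)} - (1/b) e_{(π+(d+1))}` where `b = |B_π|`. -/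
theorem up_eFun_congruence {d : ℕ} (π : Setoid (Fin (d + 1))) :
    EquivI (Fin.last (d + 1)) (up (eFun π))
      ((1 / (blockCard π (Fin.last d) : ℚ)) • eFun (addSingleton π)
        - (1 / (blockCard π (Fin.last d) : ℚ)) • eFun (addLast π)) := by
  exact UpE.final π
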